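/- For every a ≥ 3 and b ≥ 2, the graph G_{a,b} obtained from a clique K_a by adding a vertex u adjacent to one vertex of K_a, and adding b further vertices all adjacent only to u, satisfies α*(G_{a,b}) = b + a/2, α(G_{a,b}) = b + 1, and has a + b + 1 vertices; consequently α*(G_{a,b}) > max(α(G_{a,b}), (a+b+1)/2). -/

import Mathlib

open Finset

/-- A fractional independence weighting of a graph. -/
def IsFIW {V : Type*} (G : SimpleGraph V) (φ : V → ℝ) : Prop :=
  (∀ v, 0 ≤ φ v ∧ φ v ≤ 1) ∧ ∀ u w, G.Adj u w → φ u + φ w ≤ 1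

/-- The fractional independence number of a graph. -/
noncomputable def fracIndepNum {V : Type*} [Fintype V] (G : SimpleGraph V) : ℝ :=
  sSup {s : ℝ | ∃ φ : V → ℝ, IsFIW G φ ∧ s = ∑ v, φ v}

/-- An independent set of a graph. -/
def IsIndepSet {V : Type*} (G : SimpleGraph V) (s : Set V) : Prop :=
  s.Pairwise fun u w => ¬ G.Adj u w

/-- The independence number of a graph. -/
noncomputable def indepNum {V : Type*} [Fintype V] (G : SimpleGraph V) : ℕ :=
  sSup {n : ℕ | ∃ s : Finset V, IsIndepSet G ↑s ∧ s.card = n}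

/-- The graph `G_{a,b}`: a clique on vertices `0,…,a-1`, a vertex `u = a` joined to the
clique vertex `0`, and `b` further vertices `a+1,…,a+b` joined only to `u`. -/
def Gab (a b : ℕ) : SimpleGraph (Fin (a + b + 1)) :=
  SimpleGraph.fromRel (fun x y =>
    ((x : ℕ) < a ∧ (y : ℕ) < a) ∨ ((x : ℕ) = a ∧ ((y : ℕ) = 0 ∨ a < (y : ℕ))))

/-- For `a ≥ 3`, `b ≥ 2`, the graph `G_{a,b}` has `a+b+1` vertices,
`α*(G_{a,b}) = b + a/2`, `α(G_{a,b}) = b + 1`, and `α* > max(α, (a+b+1)/2)`. -/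

lemma gab_adj {a b : ℕ} {x y : Fin (a + b + 1)} :
    (Gab a b).Adj x y ↔ x ≠ y ∧
      (((x : ℕ) < a ∧ (y : ℕ) < a) ∨ ((x : ℕ) = a ∧ ((y : ℕ) = 0 ∨ a < (y : ℕ)))
        ∨ ((y : ℕ) = a ∧ ((x : ℕ) = 0 ∨ a < (x : ℕ)))) := by
  simp only [Gab, SimpleGraph.fromRel_adj]
  tauto

lemma fiw_sum_le (a b : ℕ) (ha : 3 ≤ a) (hb : 2 ≤ b) (φ : Fin (a + b + 1) → ℝ)
    (hφ : IsFIW (Gab a b) φ) : ∑ v, φ v ≤ (b : ℝ) + (a : ℝ) / 2 := by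
  obtain ⟨h01, hadj⟩ := hφ
  set f : ℕ → ℝ := fun i => if h : i < a + b + 1 then φ ⟨i, h⟩ else 0 with hf
  have hf01 : ∀ i, 0 ≤ f i ∧ f i ≤ 1 := by
    intro i
    simp only [hf]
    split
    · exact h01 _
    · norm_num
  have hedge : ∀ i j : ℕ, i < a + b + 1 → j < a + b + 1 → i ≠ j →
      ((i < a ∧ j < a) ∨ (i = a ∧ (j = 0 ∨ a < j)) ∨ (j = a ∧ (i = 0 ∨ a < i))) →
      f i + f j ≤ 1 := by
    intro i j hi hj hij hr
    have hA : (Gab a b).Adj ⟨i, hi⟩ ⟨j, hj⟩ := by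
      rw [gab_adj]
      exact ⟨by simp [Fin.ext_iff, hij], by simpa using hr⟩
    have := hadj _ _ hA
    show (if h : i < a + b + 1 then φ ⟨i, h⟩ else 0) + (if h : j < a + b + 1 then φ ⟨j, h⟩ else 0) ≤ 1
    rw [dif_pos hi, dif_pos hj]
    exact this
  have hsum : ∑ v, φ v = ∑ i ∈ range (a + b + 1), f i := by
    rw [← Fin.sum_univ_eq_sum_range]
    refine Finset.sum_congr rfl fun i _ => ?_
    show φ i = (if h : (i : ℕ) < a + b + 1 then φ ⟨i, h⟩ else 0)
    rw [dif_pos i.isLt]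
  -- split the sum
  have h1 : ∑ i ∈ range (a + b + 1), f i
      = ∑ i ∈ range a, f i + ∑ i ∈ range (b + 1), f (a + i) :=
    Finset.sum_range_add f a (b + 1)
  have h2 : ∑ i ∈ range (b + 1), f (a + i)
      = ∑ i ∈ range b, f (a + (i + 1)) + f (a + 0) :=
    Finset.sum_range_succ' (fun i => f (a + i)) b
  -- clique bound
  set S := ∑ i ∈ range a, f i with hS
  have hcast : ((a - 1 : ℕ) : ℝ) = (a : ℝ) - 1 := by
    rw [Nat.cast_sub (by omega)]; norm_num
  have key : ∀ i ∈ range a, ∑ j ∈ (range a).erase i, (f i + f j) ≤ (a : ℝ) - 1 := by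
    intro i hi
    have hcard : ((range a).erase i).card = a - 1 := by
      rw [card_erase_of_mem hi, card_range]
    calc ∑ j ∈ (range a).erase i, (f i + f j) ≤ ∑ _j ∈ (range a).erase i, (1 : ℝ) := by
          refine Finset.sum_le_sum fun j hj => ?_
          have hj' := Finset.mem_erase.mp hj
          have hia := Finset.mem_range.mp hi
          have hja := Finset.mem_range.mp hj'.2
          exact hedge i j (by omega) (by omega) (fun h => hj'.1 h.symm)
            (Or.inl ⟨hia, hja⟩)
      _ = (a : ℝ) - 1 := by rw [Finset.sum_const, hcard, nsmul_eq_mul, mul_one, hcast]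
  have expand : ∀ i ∈ range a, ∑ j ∈ (range a).erase i, (f i + f j)
      = ((a : ℝ) - 2) * f i + S := by
    intro i hi
    rw [Finset.sum_add_distrib, Finset.sum_const, card_erase_of_mem hi, card_range,
      Finset.sum_erase_eq_sub hi, nsmul_eq_mul, hcast]
    ring
  have hS2 : (2 * (a : ℝ) - 2) * S ≤ (a : ℝ) * ((a : ℝ) - 1) := by
    have e1 : ∑ i ∈ range a, ∑ j ∈ (range a).erase i, (f i + f j)
        = (2 * (a : ℝ) - 2) * S := by
      rw [Finset.sum_congr rfl expand, Finset.sum_add_distrib, ← Finset.mul_sum,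
        Finset.sum_const, card_range, nsmul_eq_mul]
      ring
    have e2 : ∑ i ∈ range a, ∑ j ∈ (range a).erase i, (f i + f j)
        ≤ ∑ _i ∈ range a, ((a : ℝ) - 1) := Finset.sum_le_sum key
    rw [Finset.sum_const, card_range, nsmul_eq_mul] at e2
    linarith [e1 ▸ e2]
  have ha3 : (3 : ℝ) ≤ (a : ℝ) := by exact_mod_cast ha
  have hSa : S ≤ (a : ℝ) / 2 := by nlinarith
  -- leaves bound
  obtain ⟨m, hm⟩ : ∃ m, b = m + 1 := ⟨b - 1, by omega⟩
  have hrest : ∑ i ∈ range b, f (a + (i + 1)) + f (a + 0) ≤ (b : ℝ) := by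
    have h3 : ∑ i ∈ range b, f (a + (i + 1))
        = ∑ i ∈ range m, f (a + (i + 1 + 1)) + f (a + (0 + 1)) := by
      rw [hm]
      exact Finset.sum_range_succ' (fun i => f (a + (i + 1))) m
    have h4 : ∑ i ∈ range m, f (a + (i + 1 + 1)) ≤ (m : ℝ) := by
      calc ∑ i ∈ range m, f (a + (i + 1 + 1)) ≤ ∑ _i ∈ range m, (1 : ℝ) :=
            Finset.sum_le_sum fun i _ => (hf01 _).2
        _ = (m : ℝ) := by rw [Finset.sum_const, card_range, nsmul_eq_mul, mul_one]
    have h5 : f (a + 0) + f (a + (0 + 1)) ≤ 1 :=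
      hedge (a + 0) (a + (0 + 1)) (by omega) (by omega) (by omega)
        (Or.inr (Or.inl ⟨by omega, Or.inr (by omega)⟩))
    have hmb : (m : ℝ) = (b : ℝ) - 1 := by rw [hm]; push_cast; ring
    rw [h3]
    linarith
  rw [hsum, h1, h2]
  linarith

noncomputable def phi0 (a b : ℕ) : Fin (a + b + 1) → ℝ :=
  fun v => if (v : ℕ) < a then 1 / 2 else if (v : ℕ) = a then 0 else 1

lemma phi0_fiw (a b : ℕ) (ha : 3 ≤ a) : IsFIW (Gab a b) (phi0 a b) := by
  constructor
  · intro v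
    unfold phi0
    split_ifs <;> norm_num
  · intro x y hxy
    rw [gab_adj] at hxy
    obtain ⟨hne, hr⟩ := hxy
    have hne' : (x : ℕ) ≠ (y : ℕ) := by simpa [Fin.ext_iff] using hne
    unfold phi0
    rcases x with ⟨i, hi⟩
    rcases y with ⟨j, hj⟩
    simp only [Fin.val_mk] at hr hne' ⊢
    split_ifs <;> first | (exfalso; omega) | norm_num

lemma phi0_sum (a b : ℕ) (ha : 3 ≤ a) :
    ∑ v, phi0 a b v = (b : ℝ) + (a : ℝ) / 2 := by
  set f : ℕ → ℝ := fun i => if i < a then 1 / 2 else if i = a then 0 else 1 with hf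
  have hsum : ∑ v, phi0 a b v = ∑ i ∈ range (a + b + 1), f i := by
    rw [← Fin.sum_univ_eq_sum_range]
    exact Finset.sum_congr rfl fun i _ => rfl
  have h1 : ∑ i ∈ range (a + b + 1), f i
      = ∑ i ∈ range a, f i + ∑ i ∈ range (b + 1), f (a + i) :=
    Finset.sum_range_add f a (b + 1)
  have h2 : ∑ i ∈ range (b + 1), f (a + i)
      = ∑ i ∈ range b, f (a + (i + 1)) + f (a + 0) :=
    Finset.sum_range_succ' (fun i => f (a + i)) b
  have h3 : ∑ i ∈ range a, f i = (a : ℝ) / 2 := by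
    rw [Finset.sum_congr rfl (fun i hi => show f i = 1 / 2 by
      simp [hf, Finset.mem_range.mp hi])]
    rw [Finset.sum_const, card_range, nsmul_eq_mul]
    ring
  have h4 : ∑ i ∈ range b, f (a + (i + 1)) = (b : ℝ) := by
    rw [Finset.sum_congr rfl (fun i _ => show f (a + (i + 1)) = 1 by
      simp only [hf]; rw [if_neg (by omega), if_neg (by omega)])]
    rw [Finset.sum_const, card_range, nsmul_eq_mul, mul_one]
  have h5 : f (a + 0) = 0 := by
    simp only [hf]; rw [if_neg (by omega), if_pos (by omega)]
  rw [hsum, h1, h2, h3, h4, h5]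
  ring

def leaves (a b : ℕ) : Finset (Fin (a + b + 1)) :=
  univ.filter (fun x => a < (x : ℕ))

lemma leaves_card (a b : ℕ) : (leaves a b).card = b := by
  have himg : leaves a b
      = Finset.image (fun i : Fin b => (⟨a + 1 + i, by omega⟩ : Fin (a + b + 1))) univ := by
    ext x
    simp only [leaves, mem_filter, mem_univ, true_and, Finset.mem_image]
    constructor
    · intro hx
      have hlt := x.isLt
      exact ⟨⟨(x : ℕ) - a - 1, by omega⟩, by rw [Fin.ext_iff]; simp; omega⟩
    · rintro ⟨i, rfl⟩
      simp
      omega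
  rw [himg, Finset.card_image_of_injective _ (fun i j h => by
    rw [Fin.ext_iff] at h ⊢
    simp only [Fin.val_mk] at h
    omega), card_univ, Fintype.card_fin]

def bigIndep (a b : ℕ) : Finset (Fin (a + b + 1)) :=
  insert (⟨0, by omega⟩ : Fin (a + b + 1)) (leaves a b)

lemma bigIndep_card (a b : ℕ) (ha : 3 ≤ a) : (bigIndep a b).card = b + 1 := by
  rw [bigIndep, Finset.card_insert_of_notMem (by simp [leaves]), leaves_card]

lemma bigIndep_indep (a b : ℕ) (ha : 3 ≤ a) :
    IsIndepSet (Gab a b) ↑(bigIndep a b) := by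
  intro x hx y hy hxy hadj
  rw [gab_adj] at hadj
  obtain ⟨-, hr⟩ := hadj
  have hx' : (x : ℕ) = 0 ∨ a < (x : ℕ) := by
    simp only [bigIndep, leaves, Finset.coe_insert, Set.mem_insert_iff, Finset.mem_coe,
      mem_filter, mem_univ, true_and] at hx
    rcases hx with h | h
    · exact Or.inl (by rw [h])
    · exact Or.inr h
  have hy' : (y : ℕ) = 0 ∨ a < (y : ℕ) := by
    simp only [bigIndep, leaves, Finset.coe_insert, Set.mem_insert_iff, Finset.mem_coe,
      mem_filter, mem_univ, true_and] at hy
    rcases hy with h | h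
    · exact Or.inl (by rw [h])
    · exact Or.inr h
  have hne' : (x : ℕ) ≠ (y : ℕ) := by simpa [Fin.ext_iff] using hxy
  omega

lemma indep_card_le (a b : ℕ) (ha : 3 ≤ a) (hb : 2 ≤ b)
    (s : Finset (Fin (a + b + 1))) (hs : IsIndepSet (Gab a b) ↑s) :
    s.card ≤ b + 1 := by
  have hnadj : ∀ x ∈ s, ∀ y ∈ s, (x : ℕ) ≠ (y : ℕ) →
      ¬(((x : ℕ) < a ∧ (y : ℕ) < a) ∨ ((x : ℕ) = a ∧ ((y : ℕ) = 0 ∨ a < (y : ℕ)))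
        ∨ ((y : ℕ) = a ∧ ((x : ℕ) = 0 ∨ a < (x : ℕ)))) := by
    intro x hx y hy hne hr
    exact hs (Finset.mem_coe.2 hx) (Finset.mem_coe.2 hy)
      (fun h => hne (by rw [h])) (gab_adj.mpr ⟨fun h => hne (by rw [h]), hr⟩)
  have hsplit : (s.filter (fun x : Fin (a + b + 1) => (x : ℕ) < a)).card
      + (s.filter (fun x : Fin (a + b + 1) => ¬(x : ℕ) < a)).card = s.card :=
    Finset.card_filter_add_card_filter_not _
  have hcl : (s.filter (fun x : Fin (a + b + 1) => (x : ℕ) < a)).card ≤ 1 := by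
    refine Finset.card_le_one.mpr fun x hx y hy => ?_
    simp only [mem_filter] at hx hy
    by_contra hne
    have hne' : (x : ℕ) ≠ (y : ℕ) := fun h => hne (Fin.val_injective h)
    exact hnadj x hx.1 y hy.1 hne' (Or.inl ⟨hx.2, hy.2⟩)
  by_cases hu : ∃ x ∈ s, (x : ℕ) = a
  · obtain ⟨u, hus, hua⟩ := hu
    have hsub : s.filter (fun x : Fin (a + b + 1) => ¬(x : ℕ) < a) ⊆ {u} := by
      intro x hx
      simp only [mem_filter] at hx
      simp only [Finset.mem_singleton]
      by_contra hne
      have hne' : (x : ℕ) ≠ (u : ℕ) := by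
        intro h
        exact hne (Fin.val_injective (by omega))
      rcases Nat.lt_or_ge a (x : ℕ) with h | h
      · exact hnadj u hus x hx.1 (by omega) (Or.inr (Or.inl ⟨hua, Or.inr h⟩))
      · exact hne' (by omega)
    have := Finset.card_le_card hsub
    simp only [Finset.card_singleton] at this
    omega
  · push_neg at hu
    have hsub : s.filter (fun x : Fin (a + b + 1) => ¬(x : ℕ) < a) ⊆ leaves a b := by
      intro x hx
      simp only [mem_filter] at hx
      have := hu x hx.1
      simp only [leaves, mem_filter, mem_univ, true_and]
      omega
    have := Finset.card_le_card hsub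
    rw [leaves_card] at this
    omega

theorem stmt_5 (a b : ℕ) (ha : 3 ≤ a) (hb : 2 ≤ b) :
    fracIndepNum (Gab a b) = (b : ℝ) + (a : ℝ) / 2 ∧
    indepNum (Gab a b) = b + 1 ∧
    Fintype.card (Fin (a + b + 1)) = a + b + 1 ∧
    fracIndepNum (Gab a b) >
      max ((indepNum (Gab a b) : ℝ)) (((a : ℝ) + b + 1) / 2) := by
  have hub : ∀ x ∈ {s : ℝ | ∃ φ : Fin (a + b + 1) → ℝ, IsFIW (Gab a b) φ ∧ s = ∑ v, φ v},
      x ≤ (b : ℝ) + (a : ℝ) / 2 := by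
    rintro x ⟨φ, hφ, rfl⟩
    exact fiw_sum_le a b ha hb φ hφ
  have hmem : (b : ℝ) + (a : ℝ) / 2
      ∈ {s : ℝ | ∃ φ : Fin (a + b + 1) → ℝ, IsFIW (Gab a b) φ ∧ s = ∑ v, φ v} :=
    ⟨phi0 a b, phi0_fiw a b ha, (phi0_sum a b ha).symm⟩
  have hfrac : fracIndepNum (Gab a b) = (b : ℝ) + (a : ℝ) / 2 := by
    unfold fracIndepNum
    exact le_antisymm (csSup_le ⟨_, hmem⟩ hub) (le_csSup ⟨_, hub⟩ hmem)
  have hubN : ∀ n ∈ {n : ℕ | ∃ s : Finset (Fin (a + b + 1)),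
      IsIndepSet (Gab a b) ↑s ∧ s.card = n}, n ≤ b + 1 := by
    rintro n ⟨s, hs, rfl⟩
    exact indep_card_le a b ha hb s hs
  have hmemN : b + 1 ∈ {n : ℕ | ∃ s : Finset (Fin (a + b + 1)),
      IsIndepSet (Gab a b) ↑s ∧ s.card = n} :=
    ⟨bigIndep a b, bigIndep_indep a b ha, bigIndep_card a b ha⟩
  have hind : indepNum (Gab a b) = b + 1 := by
    unfold indepNum
    exact le_antisymm (csSup_le ⟨_, hmemN⟩ hubN) (le_csSup ⟨_, hubN⟩ hmemN)
  refine ⟨hfrac, hind, Fintype.card_fin _, ?_⟩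
  rw [hfrac, hind]
  have ha3 : (3 : ℝ) ≤ (a : ℝ) := by exact_mod_cast ha
  have hb2 : (2 : ℝ) ≤ (b : ℝ) := by exact_mod_cast hb
  rw [gt_iff_lt, max_lt_iff]
  constructor
  · push_cast
    linarith
  · linarith
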